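/- Let P(x) = ∑_α c_α x^α ∈ ℤ[x₁,…,xₙ] be a nonzero homogeneous polynomial (all multi-indexes α ∈ supp(P) have the same length |α|). If ∑_{α∈Γ} c_α ≠ 0 for every nonempty subset Γ ⊆ supp(P), then P is not partition regular on ℕ: there exists a finite partition of ℕ such that no monochromatic tuple (a₁,…,aₙ) satisfies P(a₁,…,aₙ) = 0. -/

import Mathlib

open Finset

private lemma bern (d : ℕ) {x : ℝ} (hx0 : 0 ≤ x) (hx1 : x ≤ 1) :
    (1 + x) ^ d ≤ 1 + ((2:ℝ) ^ d - 1) * x := by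
  induction d with
  | zero => simp
  | succ d ih =>
    have h2 : (1:ℝ) ≤ 2 ^ d := one_le_pow₀ (by norm_num)
    calc (1+x)^(d+1) = (1+x)^d * (1+x) := by ring
      _ ≤ (1 + ((2:ℝ)^d - 1)*x) * (1+x) := by
          apply mul_le_mul_of_nonneg_right ih (by linarith)
      _ ≤ 1 + ((2:ℝ)^(d+1) - 1)*x := by
          have hx2 : x * x ≤ x := by nlinarith
          rw [pow_succ]
          nlinarith [mul_nonneg (sub_nonneg.mpr h2) (sub_nonneg.mpr hx2)]

set_option maxHeartbeats 1600000 in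
theorem not_pr_homogeneous {n : ℕ} (P : MvPolynomial (Fin n) ℤ) (hP : P ≠ 0)
    (d : ℕ) (hhom : ∀ α ∈ P.support, (∑ i, α i) = d)
    (h : ∀ Γ : Finset (Fin n →₀ ℕ), Γ ⊆ P.support → Γ.Nonempty →
      ∑ α ∈ Γ, P.coeff α ≠ 0) :
    ∃ (r : ℕ) (C : ℕ+ → Fin r), ∀ a : Fin n → ℕ+,
      (∀ i j, C (a i) = C (a j)) →
      MvPolynomial.eval (fun i => ((a i : ℕ) : ℤ)) P ≠ 0 := by
  classical
  have hsupp : P.support.Nonempty := by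
    rw [Finset.nonempty_iff_ne_empty]
    intro hc
    exact hP (MvPolynomial.support_eq_empty.mp hc)
  set K : ℕ := ∑ α ∈ P.support, (P.coeff α).natAbs with hKdef
  have hK : 1 ≤ K := by
    obtain ⟨α, hα⟩ := hsupp
    have h1 : 1 ≤ (P.coeff α).natAbs :=
      Int.natAbs_pos.mpr (MvPolynomial.mem_support_iff.mp hα)
    exact le_trans h1 (Finset.single_le_sum (f := fun α => (MvPolynomial.coeff α P).natAbs) (fun _ _ => Nat.zero_le _) hα)
  set N : ℕ := 2^(d+1) * K with hNdef
  set b : ℕ := 4 * K with hbdef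
  have hN : 0 < N := by positivity
  have hb : 1 < b := by omega
  set m : ℕ := N * b with hmdef
  have hm : 0 < m := by positivity
  have hCb : ∀ a : ℕ+, ((a:ℕ) * m) / b ^ (Nat.log b a + 1) < m := by
    intro a
    have ha : (a:ℕ) < b ^ (Nat.log b a + 1) := Nat.lt_pow_succ_log_self hb a
    exact Nat.div_lt_of_lt_mul (mul_lt_mul_of_pos_right ha hm)
  refine ⟨m, fun a => ⟨((a:ℕ) * m) / b ^ (Nat.log b a + 1), hCb a⟩, ?_⟩
  intro a hmono
  -- case n = 0
  rcases Nat.eq_zero_or_pos n with hn | hn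
  · subst hn
    rw [MvPolynomial.eval_eq']
    have hone : ∀ α ∈ P.support, P.coeff α * (∏ i, ((a i:ℕ):ℤ) ^ α i) = P.coeff α := by
      intro α _
      simp
    rw [Finset.sum_congr rfl hone]
    exact h P.support Finset.Subset.rfl hsupp
  -- main case
  set i0 : Fin n := ⟨0, hn⟩ with hi0
  set k : Fin n → ℕ := fun i => Nat.log b (a i) with hk
  set j : ℕ := ((a i0 : ℕ) * m) / b ^ (k i0 + 1) with hjdef
  have hja : ∀ i, ((a i : ℕ) * m) / b ^ (k i + 1) = j := by
    intro i
    have := hmono i i0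
    simpa [Fin.mk.injEq] using this
  -- nat bounds
  have hbk : ∀ i, 0 < b ^ (k i + 1) := fun i => Nat.pow_pos (by omega)
  have hnat1 : ∀ i, j * b ^ (k i) ≤ (a i : ℕ) * N := by
    intro i
    have h1 : j * b ^ (k i + 1) ≤ (a i : ℕ) * m := by
      rw [← hja i]; exact Nat.div_mul_le_self _ _
    have h2 : j * b ^ (k i) * b ≤ (a i : ℕ) * N * b := by
      calc j * b ^ (k i) * b = j * b ^ (k i + 1) := by ring
        _ ≤ (a i : ℕ) * m := h1
        _ = (a i : ℕ) * N * b := by rw [hmdef]; ring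
    exact Nat.le_of_mul_le_mul_right h2 (by omega)
  have hnat2 : ∀ i, (a i : ℕ) * N < (j + 1) * b ^ (k i) := by
    intro i
    have h1 : (a i : ℕ) * m < (j + 1) * b ^ (k i + 1) := by
      have h0 := (Nat.div_lt_iff_lt_mul (hbk i)).mp
        (Nat.lt_succ_self (((a i:ℕ) * m) / b ^ (k i + 1)))
      rw [hja i] at h0
      exact h0
    have h2 : (a i : ℕ) * N * b < (j + 1) * b ^ (k i) * b := by
      calc (a i : ℕ) * N * b = (a i : ℕ) * m := by rw [hmdef]; ring
        _ < (j + 1) * b ^ (k i + 1) := h1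
        _ = (j + 1) * b ^ (k i) * b := by ring
    exact Nat.lt_of_mul_lt_mul_right h2
  have hNj : N ≤ j := by
    have hpow : b ^ (k i0) ≤ (a i0 : ℕ) := Nat.pow_log_le_self b (a i0).pos.ne'
    have h1 : N * b ^ (k i0) ≤ (a i0 : ℕ) * N := by
      calc N * b ^ (k i0) = b ^ (k i0) * N := mul_comm _ _
        _ ≤ (a i0 : ℕ) * N := Nat.mul_le_mul hpow le_rfl
    have h2 : N * b ^ (k i0) < (j + 1) * b ^ (k i0) := lt_of_le_of_lt h1 (hnat2 i0)
    have h3 := Nat.lt_of_mul_lt_mul_right h2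
    omega
  -- real setup
  have hbR : (1:ℝ) < (b:ℝ) := by exact_mod_cast hb
  have hbR0 : (0:ℝ) < (b:ℝ) := by linarith
  have hNR : (0:ℝ) < (N:ℝ) := by exact_mod_cast hN
  set t : Fin n → ℝ := fun i => ((a i : ℕ):ℝ) / (b:ℝ) ^ (k i) with ht
  set u : ℝ := (j:ℝ) / (N:ℝ) with hu
  set δ : ℝ := 1 / (N:ℝ) with hδ
  have hδ0 : 0 < δ := by positivity
  have hδ1 : δ ≤ 1 := by
    rw [hδ, div_le_one hNR]
    exact_mod_cast hN
  have hu1 : 1 ≤ u := by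
    rw [hu, le_div_iff₀ hNR]
    have : (N:ℝ) ≤ (j:ℝ) := by exact_mod_cast hNj
    linarith
  have hu0 : 0 ≤ u := by linarith
  have htlb : ∀ i, u ≤ t i := by
    intro i
    have hb' : (0:ℝ) < (b:ℝ)^(k i) := by positivity
    rw [hu, ht]
    simp only []
    rw [div_le_div_iff₀ hNR hb']
    have h1 : (j:ℝ) * (b:ℝ)^(k i) ≤ ((a i:ℕ):ℝ) * (N:ℝ) := by exact_mod_cast hnat1 i
    linarith
  have htub : ∀ i, t i ≤ u + δ := by
    intro i
    have hb' : (0:ℝ) < (b:ℝ)^(k i) := by positivity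
    have h2 : ((a i:ℕ):ℝ) * (N:ℝ) ≤ ((j:ℝ)+1) * (b:ℝ)^(k i) := by
      exact_mod_cast le_of_lt (hnat2 i)
    rw [ht, hu, hδ, ← add_div]
    simp only []
    rw [div_le_div_iff₀ hb' hNR]
    linarith
  have ht0 : ∀ i, 0 < t i := fun i => lt_of_lt_of_le (by linarith) (htlb i)
  -- epsilon
  set ε : ℝ := ((2:ℝ)^d - 1) * δ with hε
  have h2d1 : (1:ℝ) ≤ 2^d := one_le_pow₀ (by norm_num)
  have hε0 : 0 ≤ ε := mul_nonneg (by linarith) (le_of_lt hδ0)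
  have hKR : (1:ℝ) ≤ (K:ℝ) := by exact_mod_cast hK
  have hKε : (K:ℝ) * ε ≤ 1/2 := by
    have hNval : (N:ℝ) = 2^(d+1) * (K:ℝ) := by rw [hNdef]; push_cast; ring
    have hK0 : (0:ℝ) < K := by linarith
    rw [hε, hδ, hNval]
    have key : (K:ℝ) * (((2:ℝ)^d - 1) * (1 / ((2:ℝ)^(d+1) * (K:ℝ)))) =
        ((2:ℝ)^d - 1)/(2:ℝ)^(d+1) := by
      field_simp
    rw [key, div_le_iff₀ (by positivity : (0:ℝ) < (2:ℝ)^(d+1)), pow_succ]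
    nlinarith
  have hε12 : ε ≤ 1/2 := by nlinarith
  have hud : (0:ℝ) < u^d := by positivity
  -- bounds on monomial products of t
  have hT : ∀ α ∈ P.support, u^d ≤ (∏ i, t i ^ α i) ∧ (∏ i, t i ^ α i) ≤ u^d * (1+ε) := by
    intro α hα
    have hsum : (∑ i, α i) = d := hhom α hα
    constructor
    · calc u^d = ∏ i, u ^ α i := by rw [Finset.prod_pow_eq_pow_sum, hsum]
        _ ≤ ∏ i, t i ^ α i := Finset.prod_le_prod (fun i _ => by positivity)
            (fun i _ => pow_le_pow_left₀ hu0 (htlb i) _)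
    · have hber := bern d (le_of_lt hδ0) hδ1
      calc (∏ i, t i ^ α i) ≤ ∏ i, (u+δ) ^ α i :=
            Finset.prod_le_prod (fun i _ => pow_nonneg (le_of_lt (ht0 i)) _)
              (fun i _ => pow_le_pow_left₀ (le_of_lt (ht0 i)) (htub i) _)
        _ = (u+δ)^d := by rw [Finset.prod_pow_eq_pow_sum, hsum]
        _ ≤ (u*(1+δ))^d := pow_le_pow_left₀ (by linarith) (by nlinarith) d
        _ = u^d * (1+δ)^d := mul_pow _ _ _
        _ ≤ u^d * (1+ε) := by
            have h1 : (1+δ)^d ≤ 1 + ε := by rw [hε]; exact hber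
            nlinarith
  -- gamma and S
  set e : (Fin n →₀ ℕ) → ℕ := fun α => ∑ i, k i * α i with he
  set E : ℕ := P.support.sup e with hE
  set Γ : Finset (Fin n →₀ ℕ) := P.support.filter (fun α => e α = E) with hΓ
  have hΓsub : Γ ⊆ P.support := Finset.filter_subset _ _
  have hΓne : Γ.Nonempty := by
    obtain ⟨α, hα, hαe⟩ := Finset.exists_mem_eq_sup P.support hsupp e
    exact ⟨α, Finset.mem_filter.mpr ⟨hα, hαe.symm⟩⟩
  set S : ℤ := ∑ α ∈ Γ, P.coeff α with hS
  have hS0 : S ≠ 0 := h Γ hΓsub hΓne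
  have hS1 : (1:ℝ) ≤ |(S:ℝ)| := by
    have h1 : (1:ℤ) ≤ |S| := Int.one_le_abs hS0
    have h2 : ((|S|:ℤ):ℝ) = |(S:ℝ)| := by push_cast; ring
    rw [← h2]; exact_mod_cast h1
  -- coefficient abs sums
  have habs : ∀ s : Finset (Fin n →₀ ℕ), s ⊆ P.support →
      ∑ α ∈ s, |((P.coeff α:ℤ):ℝ)| ≤ (K:ℝ) := by
    intro s hs
    have h1 : ∑ α ∈ s, (P.coeff α).natAbs ≤ K := by
      rw [hKdef]
      exact Finset.sum_le_sum_of_subset hs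
    have h2 : (∑ α ∈ s, ((P.coeff α).natAbs : ℝ)) ≤ (K:ℝ) := by exact_mod_cast h1
    refine le_trans (le_of_eq ?_) h2
    exact Finset.sum_congr rfl (fun α _ => by rw [Nat.cast_natAbs, Int.cast_abs])
  -- main identity
  intro hzero
  have hVR : (∑ α ∈ P.support, ((P.coeff α:ℤ):ℝ) * ∏ i, ((a i:ℕ):ℝ) ^ α i) = 0 := by
    rw [MvPolynomial.eval_eq'] at hzero
    have := congrArg (fun z : ℤ => (z:ℝ)) hzero
    push_cast at this
    convert this using 1
  have hsplit : ∀ α : Fin n →₀ ℕ,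
      (∏ i, ((a i:ℕ):ℝ) ^ α i) = (b:ℝ)^(e α) * ∏ i, t i ^ α i := by
    intro α
    have h1 : ∀ i, ((a i:ℕ):ℝ) = (b:ℝ)^(k i) * t i := by
      intro i
      rw [ht]
      field_simp
    calc (∏ i, ((a i:ℕ):ℝ) ^ α i) = ∏ i, ((b:ℝ)^(k i) * t i) ^ α i :=
          Finset.prod_congr rfl (fun i _ => by rw [h1 i])
      _ = (∏ i, ((b:ℝ)^(k i)) ^ α i) * ∏ i, t i ^ α i := by
          rw [← Finset.prod_mul_distrib]
          exact Finset.prod_congr rfl (fun i _ => mul_pow _ _ _)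
      _ = (b:ℝ)^(e α) * ∏ i, t i ^ α i := by
          congr 1
          calc (∏ i, ((b:ℝ)^(k i)) ^ α i) = ∏ i, (b:ℝ) ^ (k i * α i) :=
                Finset.prod_congr rfl (fun i _ => (pow_mul (b:ℝ) (k i) (α i)).symm)
            _ = (b:ℝ) ^ (∑ i, k i * α i) :=
                Finset.prod_pow_eq_pow_sum Finset.univ _ _
  set Γ' : Finset (Fin n →₀ ℕ) := P.support.filter (fun α => ¬ e α = E) with hΓ'
  set A : ℝ := ∑ α ∈ Γ, ((P.coeff α:ℤ):ℝ) * ∏ i, t i ^ α i with hA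
  set R : ℝ := ∑ α ∈ Γ', ((P.coeff α:ℤ):ℝ) * ∏ i, ((a i:ℕ):ℝ) ^ α i with hR
  have hmain : (b:ℝ)^E * A + R = 0 := by
    rw [← hVR]
    have h1 : ∑ α ∈ Γ, ((P.coeff α:ℤ):ℝ) * ∏ i, ((a i:ℕ):ℝ) ^ α i = (b:ℝ)^E * A := by
      rw [hA, Finset.mul_sum]
      apply Finset.sum_congr rfl
      intro α hα
      have he' : e α = E := (Finset.mem_filter.mp hα).2
      rw [hsplit α, he']
      ring
    rw [← h1, hR]
    exact Finset.sum_filter_add_sum_filter_not P.support _ _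
  -- lower bound on |A|
  set F : ℝ := ∑ α ∈ Γ, ((P.coeff α:ℤ):ℝ) * ((∏ i, t i ^ α i) - u^d) with hF
  have hAeq : A = u^d * (S:ℝ) + F := by
    rw [hA, hF, hS]
    push_cast
    rw [Finset.mul_sum, ← Finset.sum_add_distrib]
    apply Finset.sum_congr rfl
    intro α _
    ring
  have hFb : |F| ≤ (K:ℝ) * (u^d * ε) := by
    rw [hF]
    calc |∑ α ∈ Γ, ((P.coeff α:ℤ):ℝ) * ((∏ i, t i ^ α i) - u^d)|
        ≤ ∑ α ∈ Γ, |((P.coeff α:ℤ):ℝ) * ((∏ i, t i ^ α i) - u^d)| :=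
          Finset.abs_sum_le_sum_abs _ _
      _ ≤ ∑ α ∈ Γ, |((P.coeff α:ℤ):ℝ)| * (u^d * ε) := by
          apply Finset.sum_le_sum
          intro α hα
          rw [abs_mul]
          apply mul_le_mul_of_nonneg_left _ (abs_nonneg _)
          have hb1 := (hT α (hΓsub hα)).1
          have hb2 := (hT α (hΓsub hα)).2
          rw [abs_le]
          constructor
          · nlinarith
          · nlinarith
      _ = (∑ α ∈ Γ, |((P.coeff α:ℤ):ℝ)|) * (u^d * ε) := by rw [← Finset.sum_mul]
      _ ≤ (K:ℝ) * (u^d * ε) :=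
          mul_le_mul_of_nonneg_right (habs Γ hΓsub)
            (mul_nonneg (le_of_lt hud) hε0)
  have hKud : (K:ℝ) * (u^d * ε) ≤ u^d / 2 := by nlinarith
  have hAlb : u^d/2 ≤ |A| := by
    have h1 : u^d ≤ |u^d * (S:ℝ)| := by
      rw [abs_mul, abs_of_pos hud]
      nlinarith
    have h2 : |u^d * (S:ℝ)| ≤ |A| + |F| := by
      have h3 : u^d * (S:ℝ) = A + (-F) := by rw [hAeq]; ring
      rw [h3]
      calc |A + (-F)| ≤ |A| + |(-F)| := abs_add_le _ _
        _ = |A| + |F| := by rw [abs_neg]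
    linarith [hFb, hKud]
  -- finish
  rcases Finset.eq_empty_or_nonempty Γ' with hcase | hcase
  · rw [hR, hcase, Finset.sum_empty, add_zero] at hmain
    have hbE : (0:ℝ) < (b:ℝ)^E := by positivity
    have hA0 : A = 0 := by
      rcases mul_eq_zero.mp hmain with h' | h'
      · exact absurd h' (ne_of_gt hbE)
      · exact h'
    rw [hA0, abs_zero] at hAlb
    nlinarith
  · obtain ⟨β, hβ⟩ := hcase
    have hβm := Finset.mem_filter.mp hβ
    have hβlt : e β < E := lt_of_le_of_ne (Finset.le_sup hβm.1) hβm.2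
    have hE1 : 1 ≤ E := by omega
    have hbE1 : (0:ℝ) < (b:ℝ)^(E-1) := by positivity
    have hRb : |R| ≤ (K:ℝ) * ((b:ℝ)^(E-1) * (u^d * (3/2))) := by
      rw [hR]
      calc |∑ α ∈ Γ', ((P.coeff α:ℤ):ℝ) * ∏ i, ((a i:ℕ):ℝ) ^ α i|
          ≤ ∑ α ∈ Γ', |((P.coeff α:ℤ):ℝ) * ∏ i, ((a i:ℕ):ℝ) ^ α i| :=
            Finset.abs_sum_le_sum_abs _ _
        _ ≤ ∑ α ∈ Γ', |((P.coeff α:ℤ):ℝ)| * ((b:ℝ)^(E-1) * (u^d * (3/2))) := by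
            apply Finset.sum_le_sum
            intro α hα
            rw [abs_mul]
            apply mul_le_mul_of_nonneg_left _ (abs_nonneg _)
            have hαm := Finset.mem_filter.mp hα
            have hαe : e α < E := lt_of_le_of_ne (Finset.le_sup hαm.1) hαm.2
            have hT1 := (hT α hαm.1).1
            have hT2 := (hT α hαm.1).2
            have hpow : (b:ℝ)^(e α) ≤ (b:ℝ)^(E-1) := by
              apply pow_le_pow_right₀ (le_of_lt hbR)
              omega
            have hTpos : (0:ℝ) < ∏ i, t i ^ α i := lt_of_lt_of_le hud hT1
            rw [hsplit α, abs_of_pos (mul_pos (by positivity) hTpos)]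
            calc (b:ℝ)^(e α) * ∏ i, t i ^ α i ≤ (b:ℝ)^(E-1) * (u^d*(1+ε)) :=
                  mul_le_mul hpow hT2 (le_of_lt hTpos) (le_of_lt hbE1)
              _ ≤ (b:ℝ)^(E-1) * (u^d * (3/2)) :=
                  mul_le_mul_of_nonneg_left
                    (mul_le_mul_of_nonneg_left (by linarith : (1:ℝ)+ε ≤ 3/2)
                      (le_of_lt hud)) (le_of_lt hbE1)
        _ = (∑ α ∈ Γ', |((P.coeff α:ℤ):ℝ)|) * ((b:ℝ)^(E-1) * (u^d * (3/2))) := by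
            rw [← Finset.sum_mul]
        _ ≤ (K:ℝ) * ((b:ℝ)^(E-1) * (u^d * (3/2))) :=
            mul_le_mul_of_nonneg_right (habs Γ' (Finset.filter_subset _ _))
              (by positivity)
    have h1 : (b:ℝ)^E * |A| = |R| := by
      have h0 : (b:ℝ)^E * A = -R := by linarith
      calc (b:ℝ)^E * |A| = |(b:ℝ)^E * A| := by
            rw [abs_mul, abs_of_pos (by positivity : (0:ℝ) < (b:ℝ)^E)]
        _ = |R| := by rw [h0, abs_neg]
    have hbEeq : (b:ℝ)^E = (b:ℝ)^(E-1) * (b:ℝ) := by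
      rw [← pow_succ]
      congr 1
      omega
    have hbval : (b:ℝ) = 4 * (K:ℝ) := by rw [hbdef]; push_cast; ring
    have h2 : 2*(K:ℝ) * ((b:ℝ)^(E-1) * u^d) ≤ |R| := by
      calc 2*(K:ℝ)*((b:ℝ)^(E-1)*u^d) = (b:ℝ)^E * (u^d/2) := by
            rw [hbEeq, hbval]; ring
        _ ≤ (b:ℝ)^E * |A| :=
            mul_le_mul_of_nonneg_left hAlb (le_of_lt (pow_pos hbR0 E))
        _ = |R| := h1
    have h3 : |R| ≤ (3/2)*(K:ℝ) * ((b:ℝ)^(E-1) * u^d) :=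
      le_of_le_of_eq hRb (by ring)
    have hX : (0:ℝ) < (b:ℝ)^(E-1) * u^d := mul_pos hbE1 hud
    nlinarith
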